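/- (Quantitative bias bound underlying Theorem 2.) In the setting of the bias decomposition, suppose additionally that ‖G(a)‖ ≤ B and ‖ŵ(a)‖ ≤ C_w μ-a.e. for all a ∈ α. Then |E[φ̂_unc] − Ψ(w)| ≤ B · E[∑_{a∈α} ‖ŵ(a) − w(a) + ∑_{a'∈α} H(a')·φ̂(a', a)‖] + (C_w/c) · (E[∑_{a∈α} ‖Ĝ(a) − G(a)‖²])^{1/2} · (E[∑_{a∈α} |Ĥ(a) − H(a)|²])^{1/2} + (E[∑_{a∈α} ‖φ̂(A, a) − φ(A, a)‖²])^{1/2} · (E[∑_{a∈α} ‖Ĝ(a) − G(a)‖²])^{1/2}. -/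

import Mathlib

open MeasureTheory RealInnerProductSpace

/-- Cluster-level treatment probability `H(a) = P(A = a | m) = μ[1_{A=a}|m]`. -/
noncomputable def condH {Ω α : Type*} {mΩ : MeasurableSpace Ω} [DecidableEq α]
    (μ : Measure Ω) (m : MeasurableSpace Ω) (A : Ω → α) (a : α) : Ω → ℝ :=
  μ[fun ω => if A ω = a then (1:ℝ) else 0|m]

/-- Cluster-level outcome regression `G(a) = μ[Y·1_{A=a}|m] / H(a)` (componentwise). -/
noncomputable def condG {Ω α : Type*} {mΩ : MeasurableSpace Ω} [DecidableEq α] {n : ℕ}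
    (μ : Measure Ω) (m : MeasurableSpace Ω) (A : Ω → α)
    (Y : Ω → EuclideanSpace ℝ (Fin n)) (a : α) : Ω → EuclideanSpace ℝ (Fin n) :=
  fun ω => (condH μ m A a ω)⁻¹ •
    (μ[fun ω' => (if A ω' = a then (1:ℝ) else 0) • Y ω'|m]) ω

section Aux
variable {Ω : Type*} {m mΩ : MeasurableSpace Ω}

theorem euclid_abs_apply_le_norm {n : ℕ} (x : EuclideanSpace ℝ (Fin n)) (i : Fin n) :
    |x i| ≤ ‖x‖ := by
  rw [EuclideanSpace.norm_eq, ← Real.sqrt_sq_eq_abs]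
  refine Real.sqrt_le_sqrt ?_
  calc x i ^ 2 = ‖x i‖ ^ 2 := by rw [Real.norm_eq_abs, sq_abs]
    _ ≤ ∑ j, ‖x j‖ ^ 2 := Finset.single_le_sum (f := fun j => ‖x j‖ ^ 2)
        (fun j _ => sq_nonneg _) (Finset.mem_univ i)

theorem key_alg {E : Type*} [NormedAddCommGroup E] [InnerProductSpace ℝ E]
    (u w g G K : E) (H Hh : ℝ) (hHh : Hh ≠ 0) :
    (⟪u + K, g⟫ + (H * ⟪Hh⁻¹ • u, G⟫ - H * (⟪u, g⟫ / Hh))) - ⟪w, G⟫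
      = ⟪u - w + K, G⟫ + ((Hh - H)/Hh) * ⟪u, g - G⟫ + ⟪K, g - G⟫ := by
  simp only [inner_add_left, inner_sub_left, inner_sub_right, real_inner_smul_left]
  field_simp
  ring

end Aux


section Prelude
variable {Ω : Type*} {m mΩ : MeasurableSpace Ω} (hm : m ≤ mΩ)
  (μ : Measure Ω) [IsFiniteMeasure μ]

theorem condexp_clm_comp (hm : m ≤ mΩ)
    {E F : Type*} [NormedAddCommGroup E] [NormedSpace ℝ E] [CompleteSpace E]
    [NormedAddCommGroup F] [NormedSpace ℝ F] [CompleteSpace F]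
    (L : E →L[ℝ] F) {f : Ω → E} (hf : Integrable f μ) :
    (fun ω => L ((μ[f|m]) ω)) =ᵐ[μ] μ[fun ω => L (f ω)|m] := by
  have hfi : Integrable (fun ω => L (f ω)) μ := L.integrable_comp hf
  have hce : Integrable (μ[f|m]) μ := integrable_condExp
  have hcel : Integrable (fun ω => L ((μ[f|m]) ω)) μ := L.integrable_comp hce
  refine ae_eq_condExp_of_forall_setIntegral_eq hm hfi ?_ ?_ ?_
  · intro s hs hμs
    exact hcel.integrableOn
  · intro s hs hμs
    rw [L.integral_comp_comm hce.integrableOn, L.integral_comp_comm hf.integrableOn,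
        setIntegral_condExp hm hf hs]
  · exact StronglyMeasurable.aestronglyMeasurable (L.continuous.comp_stronglyMeasurable (stronglyMeasurable_condExp (m := m)))

theorem integrable_bdd {F : Type*} [NormedAddCommGroup F] {f : Ω → F}
    (hf : AEStronglyMeasurable f μ) {C : ℝ} (h : ∀ᵐ ω ∂μ, ‖f ω‖ ≤ C) : Integrable f μ :=
  ⟨hf, HasFiniteIntegral.of_bounded h⟩

theorem memL2_bdd {f : Ω → ℝ} (hf : AEStronglyMeasurable f μ) {C : ℝ}
    (h : ∀ᵐ ω ∂μ, ‖f ω‖ ≤ C) : MemLp f 2 μ :=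
  MemLp.of_bound hf C h

/-- pull-out property, integral form -/
theorem integral_mul_condexp (hm : m ≤ mΩ) {g F : Ω → ℝ} (hg : StronglyMeasurable[m] g)
    (hF : Integrable F μ) (hgF : Integrable (fun ω => g ω * F ω) μ) :
    ∫ ω, g ω * F ω ∂μ = ∫ ω, g ω * (μ[F|m]) ω ∂μ := by
  have h1 := condExp_mul_of_stronglyMeasurable_left (μ := μ) hg hgF hF
  have h2 : ∫ ω, g ω * F ω ∂μ = ∫ ω, (μ[fun ω => g ω * F ω|m]) ω ∂μ :=
    (integral_condExp hm).symm
  rw [h2]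
  exact integral_congr_ae (h1.mono fun ω hω => hω)

/-- scalar Cauchy–Schwarz for integrals -/
theorem integral_CS {f g : Ω → ℝ} (hf : MemLp f 2 μ) (hg : MemLp g 2 μ) :
    ∫ ω, ‖f ω‖ * ‖g ω‖ ∂μ
      ≤ Real.sqrt (∫ ω, f ω ^ 2 ∂μ) * Real.sqrt (∫ ω, g ω ^ 2 ∂μ) := by
  have hpq : Real.HolderConjugate 2 2 := by constructor <;> norm_num
  have h2 : ENNReal.ofReal (2:ℝ) = 2 := by norm_num
  have := integral_mul_norm_le_Lp_mul_Lq (μ := μ) hpq (h2 ▸ hf) (h2 ▸ hg)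
  have e1 : ∀ (u : Ω → ℝ), (∫ ω, ‖u ω‖ ^ (2:ℝ) ∂μ) = ∫ ω, u ω ^ 2 ∂μ := by
    intro u
    refine integral_congr_ae (Filter.Eventually.of_forall fun ω => ?_)
    show ‖u ω‖ ^ (2:ℝ) = u ω ^ 2
    rw [Real.rpow_two, Real.norm_eq_abs, sq_abs (u ω)]
  rw [e1, e1] at this
  calc ∫ ω, ‖f ω‖ * ‖g ω‖ ∂μ
      ≤ (∫ ω, f ω ^ 2 ∂μ) ^ (1/(2:ℝ)) * (∫ ω, g ω ^ 2 ∂μ) ^ (1/(2:ℝ)) := this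
    _ = _ := by
        rw [Real.sqrt_eq_rpow, Real.sqrt_eq_rpow]

/-- finite-sum Cauchy–Schwarz with square roots -/
theorem sum_sqrt_mul_sqrt_le {α : Type*} [Fintype α] {x y : α → ℝ}
    (hx : ∀ a, 0 ≤ x a) (hy : ∀ a, 0 ≤ y a) :
    ∑ a, Real.sqrt (x a) * Real.sqrt (y a)
      ≤ Real.sqrt (∑ a, x a) * Real.sqrt (∑ a, y a) := by
  have h := Finset.sum_mul_sq_le_sq_mul_sq Finset.univ
    (fun a => Real.sqrt (x a)) (fun a => Real.sqrt (y a))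
  simp only [Real.sq_sqrt (hx _), Real.sq_sqrt (hy _)] at h
  have hnn : 0 ≤ ∑ a, Real.sqrt (x a) * Real.sqrt (y a) :=
    Finset.sum_nonneg fun a _ => mul_nonneg (Real.sqrt_nonneg _) (Real.sqrt_nonneg _)
  calc ∑ a, Real.sqrt (x a) * Real.sqrt (y a)
      = Real.sqrt ((∑ a, Real.sqrt (x a) * Real.sqrt (y a)) ^ 2) := (Real.sqrt_sq hnn).symm
    _ ≤ Real.sqrt ((∑ a, x a) * ∑ a, y a) := Real.sqrt_le_sqrt h
    _ = _ := Real.sqrt_mul (Finset.sum_nonneg fun a _ => hx a) _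


theorem integral_sum_mul_le {α : Type*} [Fintype α] {f g : α → Ω → ℝ}
    (hfm : ∀ a, MemLp (f a) 2 μ) (hgm : ∀ a, MemLp (g a) 2 μ)
    (hfgi : ∀ a, Integrable (fun ω => f a ω * g a ω) μ)
    (hf0 : ∀ a ω, 0 ≤ f a ω) (hg0 : ∀ a ω, 0 ≤ g a ω) :
    ∫ ω, ∑ a, f a ω * g a ω ∂μ
      ≤ Real.sqrt (∫ ω, ∑ a, f a ω ^ 2 ∂μ) * Real.sqrt (∫ ω, ∑ a, g a ω ^ 2 ∂μ) := by
  have hsq : ∀ (u : α → Ω → ℝ), (∀ a, MemLp (u a) 2 μ) →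
      (∫ ω, ∑ a, u a ω ^ 2 ∂μ) = ∑ a, ∫ ω, u a ω ^ 2 ∂μ := by
    intro u hu
    exact integral_finset_sum _ (fun a _ => (hu a).integrable_sq)
  rw [integral_finset_sum _ (fun a _ => hfgi a), hsq f hfm, hsq g hgm]
  calc ∑ a, ∫ ω, f a ω * g a ω ∂μ
      ≤ ∑ a, Real.sqrt (∫ ω, f a ω ^ 2 ∂μ) * Real.sqrt (∫ ω, g a ω ^ 2 ∂μ) := by
        refine Finset.sum_le_sum fun a _ => ?_
        have : ∫ ω, f a ω * g a ω ∂μ = ∫ ω, ‖f a ω‖ * ‖g a ω‖ ∂μ := by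
          refine integral_congr_ae (Filter.Eventually.of_forall fun ω => ?_)
          show f a ω * g a ω = ‖f a ω‖ * ‖g a ω‖
          rw [Real.norm_of_nonneg (hf0 a ω), Real.norm_of_nonneg (hg0 a ω)]
        rw [this]
        exact integral_CS μ (hfm a) (hgm a)
    _ ≤ _ := sum_sqrt_mul_sqrt_le
        (fun a => integral_nonneg fun ω => sq_nonneg _)
        (fun a => integral_nonneg fun ω => sq_nonneg _)

end Prelude


set_option maxHeartbeats 1000000 in
theorem stmt4_aux {Ω : Type*} {m mΩ : MeasurableSpace Ω} (hm : m ≤ mΩ)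
    (μ : Measure Ω) [IsProbabilityMeasure μ]
    {α : Type*} [Fintype α] [DecidableEq α] [MeasurableSpace α] [MeasurableSingletonClass α]
    {n : ℕ}
    (A : Ω → α) (hA : Measurable[mΩ] A)
    (Y : Ω → EuclideanSpace ℝ (Fin n)) (hY : Measurable[mΩ] Y)
    (CY : ℝ) (hYb : ∀ ω, ‖Y ω‖ ≤ CY)
    (c : ℝ) (hc : 0 < c)
    (hH : ∀ a : α, ∀ᵐ ω ∂μ, c ≤ condH μ m A a ω)
    (w : α → Ω → EuclideanSpace ℝ (Fin n)) (hw : ∀ a, Measurable[m] (w a))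
    (Cw' : ℝ) (hwb : ∀ a ω, ‖w a ω‖ ≤ Cw')
    (φ : α → α → Ω → EuclideanSpace ℝ (Fin n)) (hφ : ∀ a' a, Measurable[m] (φ a' a))
    (Cφ : ℝ) (hφb : ∀ a' a ω, ‖φ a' a ω‖ ≤ Cφ)
    (hφ0 : ∀ a : α, ∀ᵐ ω ∂μ, ∑ a', condH μ m A a' ω • φ a' a ω = 0)
    (Gh : α → Ω → EuclideanSpace ℝ (Fin n)) (hGh : ∀ a, Measurable[m] (Gh a))
    (CG : ℝ) (hGhb : ∀ a ω, ‖Gh a ω‖ ≤ CG)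
    (Hh : α → Ω → ℝ) (hHh : ∀ a, Measurable[m] (Hh a))
    (hHhc : ∀ a : α, ∀ᵐ ω ∂μ, c ≤ Hh a ω) (hHhb : ∀ a ω, Hh a ω ≤ 1)
    (wh : α → Ω → EuclideanSpace ℝ (Fin n)) (hwh : ∀ a, Measurable[m] (wh a))
    (φh : α → α → Ω → EuclideanSpace ℝ (Fin n)) (hφh : ∀ a' a, Measurable[m] (φh a' a))
    (Cφh : ℝ) (hφhb : ∀ a' a ω, ‖φh a' a ω‖ ≤ Cφh)
    (B : ℝ) (hGB : ∀ a : α, ∀ᵐ ω ∂μ, ‖condG μ m A Y a ω‖ ≤ B)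
    (Cw : ℝ) (hwhB : ∀ a : α, ∀ᵐ ω ∂μ, ‖wh a ω‖ ≤ Cw) :
    |(∫ ω, ((∑ a, ⟪wh a ω + φh (A ω) a ω, Gh a ω⟫)
          + ⟪wh (A ω) ω, Y ω - Gh (A ω) ω⟫ / Hh (A ω) ω) ∂μ)
        - ∫ ω, ∑ a, ⟪w a ω, condG μ m A Y a ω⟫ ∂μ|
      ≤ B * (∫ ω, ∑ a,
            ‖wh a ω - w a ω + ∑ a', condH μ m A a' ω • φh a' a ω‖ ∂μ)
        + (Cw / c) *
            Real.sqrt (∫ ω, ∑ a, ‖Gh a ω - condG μ m A Y a ω‖ ^ 2 ∂μ) *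
            Real.sqrt (∫ ω, ∑ a, |Hh a ω - condH μ m A a ω| ^ 2 ∂μ)
        + Real.sqrt (∫ ω, ∑ a, ‖φh (A ω) a ω - φ (A ω) a ω‖ ^ 2 ∂μ) *
            Real.sqrt (∫ ω, ∑ a, ‖Gh a ω - condG μ m A Y a ω‖ ^ 2 ∂μ) := by
  classical
  haveI hne : (ae μ).NeBot := ae_neBot.2 (IsProbabilityMeasure.ne_zero (μ := μ))
  haveI hΩ : Nonempty Ω := Filter.nonempty_of_neBot (ae μ)
  -- abbreviations
  set H : α → Ω → ℝ := condH μ m A with hHdef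
  set G : α → Ω → EuclideanSpace ℝ (Fin n) := condG μ m A Y with hGdef
  set CEY : α → Ω → EuclideanSpace ℝ (Fin n) :=
    fun a => μ[fun ω' => (if A ω' = a then (1:ℝ) else 0) • Y ω'|m] with hCEYdef
  have hGdef' : ∀ a ω, G a ω = (H a ω)⁻¹ • CEY a ω := fun a ω => rfl
  -- basic measurability
  have hindM : ∀ a : α, Measurable[mΩ] (fun ω => if A ω = a then (1:ℝ) else 0) :=
    fun a => Measurable.ite (hA (measurableSet_singleton a)) measurable_const measurable_const
  have hindb : ∀ (a : α) (ω : Ω), |(if A ω = a then (1:ℝ) else 0)| ≤ 1 := by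
    intro a ω; by_cases h : A ω = a <;> simp [h]
  have hind0 : ∀ (a : α) (ω : Ω), 0 ≤ (if A ω = a then (1:ℝ) else 0) := by
    intro a ω; by_cases h : A ω = a <;> simp [h]
  have hindint : ∀ a : α, Integrable (fun ω => if A ω = a then (1:ℝ) else 0) μ :=
    fun a => integrable_bdd μ (hindM a).aestronglyMeasurable
      (ae_of_all _ fun ω => by simpa using hindb a ω)
  have hYIm : ∀ a : α, Measurable[mΩ] (fun ω => (if A ω = a then (1:ℝ) else 0) • Y ω) :=
    fun a => (hindM a).smul hY
  have hYIb : ∀ (a : α) (ω : Ω), ‖(if A ω = a then (1:ℝ) else 0) • Y ω‖ ≤ CY := by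
    intro a ω
    rw [norm_smul]
    calc ‖(if A ω = a then (1:ℝ) else 0)‖ * ‖Y ω‖ ≤ 1 * ‖Y ω‖ := by
          apply mul_le_mul_of_nonneg_right _ (norm_nonneg _)
          simpa using hindb a ω
      _ = ‖Y ω‖ := one_mul _
      _ ≤ CY := hYb ω
  have hYIint : ∀ a : α, Integrable (fun ω => (if A ω = a then (1:ℝ) else 0) • Y ω) μ :=
    fun a => integrable_bdd μ (hYIm a).aestronglyMeasurable (ae_of_all _ (hYIb a))
  have hHsm : ∀ a, StronglyMeasurable[m] (H a) := fun a => stronglyMeasurable_condExp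
  have hHmΩ : ∀ a, Measurable[mΩ] (H a) := fun a => ((hHsm a).measurable).mono hm le_rfl
  have hCEYsm : ∀ a, StronglyMeasurable[m] (CEY a) := fun a => stronglyMeasurable_condExp
  have hGm : ∀ a, Measurable[m] (G a) := fun a =>
    ((hHsm a).measurable.inv).smul (hCEYsm a).measurable
  have hGmΩ : ∀ a, Measurable[mΩ] (G a) := fun a => (hGm a).mono hm le_rfl
  -- a.e. facts
  have hH1 : ∀ a : α, ∀ᵐ ω ∂μ, H a ω ≤ 1 := by
    intro a
    have h2 : (fun ω => if A ω = a then (1:ℝ) else 0) ≤ᵐ[μ] fun _ => 1 :=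
      ae_of_all _ fun ω => by by_cases h : A ω = a <;> simp [h]
    have h3 := condExp_mono (μ := μ) (m := m) (hindint a) (integrable_const (1:ℝ)) h2
    have h1 : μ[(fun _ => (1:ℝ))|m] = fun _ => (1:ℝ) := condExp_const (μ := μ) hm (1:ℝ)
    filter_upwards [h3] with ω hω
    calc H a ω ≤ (μ[(fun _ => (1:ℝ))|m]) ω := hω
      _ = 1 := by rw [h1]
  have hH0 : ∀ a : α, ∀ᵐ ω ∂μ, 0 ≤ H a ω := fun a =>
    condExp_nonneg (ae_of_all _ fun ω => hind0 a ω)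
  have hHG : ∀ a : α, ∀ᵐ ω ∂μ, H a ω • G a ω = CEY a ω := by
    intro a
    filter_upwards [hH a] with ω hω
    rw [hGdef']
    exact smul_inv_smul₀ (ne_of_gt (lt_of_lt_of_le hc hω)) _
  have hB0 : 0 ≤ B := by
    obtain ⟨ω, hω⟩ := (hGB (A (Classical.arbitrary Ω))).exists
    exact le_trans (norm_nonneg _) hω
  have hCw0 : 0 ≤ Cw := by
    obtain ⟨ω, hω⟩ := (hwhB (A (Classical.arbitrary Ω))).exists
    exact le_trans (norm_nonneg _) hω
  have hCEYb : ∀ a : α, ∀ᵐ ω ∂μ, ‖CEY a ω‖ ≤ B := by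
    intro a
    filter_upwards [hHG a, hGB a, hH0 a, hH1 a] with ω h1 h2 h3 h4
    rw [← h1, norm_smul]
    calc ‖H a ω‖ * ‖G a ω‖ ≤ 1 * B := by
          apply mul_le_mul _ h2 (norm_nonneg _) zero_le_one
          rw [Real.norm_eq_abs, abs_of_nonneg h3]; exact h4
      _ = B := one_mul _
  -- pull-out identities
  have I2 : ∀ (a : α) (g : Ω → ℝ), Measurable[m] g → ∀ (Cg : ℝ),
      (∀ᵐ ω ∂μ, |g ω| ≤ Cg) →
      ∫ ω, (if A ω = a then (1:ℝ) else 0) * g ω ∂μ = ∫ ω, H a ω * g ω ∂μ := by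
    intro a g hg Cg hgb
    have hgΩ : Measurable[mΩ] g := hg.mono hm le_rfl
    have hprod : Integrable (fun ω => g ω * (if A ω = a then (1:ℝ) else 0)) μ := by
      refine integrable_bdd μ (hgΩ.mul (hindM a)).aestronglyMeasurable (C := |Cg|) ?_
      filter_upwards [hgb] with ω hω
      rw [Real.norm_eq_abs, abs_mul]
      calc |g ω| * |(if A ω = a then (1:ℝ) else 0)| ≤ |Cg| * 1 :=
            mul_le_mul (le_trans hω (le_abs_self _)) (hindb a ω) (abs_nonneg _) (abs_nonneg _)
        _ = |Cg| := mul_one _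
    have key := integral_mul_condexp μ hm hg.stronglyMeasurable (hindint a) hprod
    calc ∫ ω, (if A ω = a then (1:ℝ) else 0) * g ω ∂μ
        = ∫ ω, g ω * (if A ω = a then (1:ℝ) else 0) ∂μ := by
          congr 1; funext ω; ring
      _ = ∫ ω, g ω * H a ω ∂μ := key
      _ = ∫ ω, H a ω * g ω ∂μ := by congr 1; funext ω; ring
  have I1 : ∀ (a : α) (u : Ω → EuclideanSpace ℝ (Fin n)), Measurable[m] u → ∀ (Cu : ℝ),
      (∀ᵐ ω ∂μ, ‖u ω‖ ≤ Cu) →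
      ∫ ω, ⟪u ω, (if A ω = a then (1:ℝ) else 0) • Y ω⟫ ∂μ
        = ∫ ω, H a ω * ⟪u ω, G a ω⟫ ∂μ := by
    intro a u hu Cu hub
    have hCu0 : 0 ≤ Cu := by
      obtain ⟨ω, hω⟩ := hub.exists; exact le_trans (norm_nonneg _) hω
    have huΩ : Measurable[mΩ] u := hu.mono hm le_rfl
    have hui : ∀ i : Fin n, Measurable[m] (fun ω => u ω i) := fun i =>
      (EuclideanSpace.proj (𝕜 := ℝ) i).continuous.measurable.comp hu
    have huiΩ : ∀ i : Fin n, Measurable[mΩ] (fun ω => u ω i) := fun i =>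
      (hui i).mono hm le_rfl
    have hYIi : ∀ i : Fin n, Measurable[mΩ]
        (fun ω => ((if A ω = a then (1:ℝ) else 0) • Y ω : EuclideanSpace ℝ (Fin n)) i) :=
      fun i => (EuclideanSpace.proj (𝕜 := ℝ) i).continuous.measurable.comp (hYIm a)
    have hYIiint : ∀ i : Fin n, Integrable
        (fun ω => ((if A ω = a then (1:ℝ) else 0) • Y ω : EuclideanSpace ℝ (Fin n)) i) μ := by
      intro i
      refine integrable_bdd μ (hYIi i).aestronglyMeasurable (C := CY) (ae_of_all _ fun ω => ?_)
      exact le_trans (euclid_abs_apply_le_norm _ i) (hYIb a ω)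
    have hprod : ∀ i : Fin n, Integrable (fun ω => u ω i *
        ((if A ω = a then (1:ℝ) else 0) • Y ω : EuclideanSpace ℝ (Fin n)) i) μ := by
      intro i
      refine integrable_bdd μ ((huiΩ i).mul (hYIi i)).aestronglyMeasurable (C := Cu * CY) ?_
      filter_upwards [hub] with ω hω
      rw [Real.norm_eq_abs, abs_mul]
      exact mul_le_mul (le_trans (euclid_abs_apply_le_norm _ i) hω)
        (le_trans (euclid_abs_apply_le_norm _ i) (hYIb a ω)) (abs_nonneg _)
        hCu0
    have hprod2 : ∀ i : Fin n, Integrable (fun ω => u ω i * CEY a ω i) μ := by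
      intro i
      refine integrable_bdd μ ((huiΩ i).mul
        (((EuclideanSpace.proj (𝕜 := ℝ) i).continuous.measurable.comp
          (hCEYsm a).measurable).mono hm le_rfl)).aestronglyMeasurable (C := Cu * B) ?_
      filter_upwards [hub, hCEYb a] with ω h1 h2
      rw [Real.norm_eq_abs, abs_mul]
      exact mul_le_mul (le_trans (euclid_abs_apply_le_norm _ i) h1)
        (le_trans (euclid_abs_apply_le_norm _ i) h2) (abs_nonneg _) hCu0
    have hcomp : ∀ i : Fin n,
        (fun ω => CEY a ω i) =ᵐ[μ]
          μ[fun ω => ((if A ω = a then (1:ℝ) else 0) • Y ω : EuclideanSpace ℝ (Fin n)) i|m] :=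
      by
        intro i
        have h := condexp_clm_comp μ hm (EuclideanSpace.proj (𝕜 := ℝ) i) (hYIint a)
        simp only [PiLp.proj_apply] at h
        exact h
    calc ∫ ω, ⟪u ω, (if A ω = a then (1:ℝ) else 0) • Y ω⟫ ∂μ
        = ∫ ω, ∑ i, u ω i *
            ((if A ω = a then (1:ℝ) else 0) • Y ω : EuclideanSpace ℝ (Fin n)) i ∂μ := by
          refine integral_congr_ae (ae_of_all _ fun ω => ?_)
          by_cases h : A ω = a <;>
            simp [PiLp.inner_apply, RCLike.inner_apply, conj_trivial, h, mul_comm]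
      _ = ∑ i, ∫ ω, u ω i *
            ((if A ω = a then (1:ℝ) else 0) • Y ω : EuclideanSpace ℝ (Fin n)) i ∂μ :=
          integral_finset_sum _ fun i _ => hprod i
      _ = ∑ i, ∫ ω, u ω i * CEY a ω i ∂μ := by
          refine Finset.sum_congr rfl fun i _ => ?_
          have h1 := integral_mul_condexp μ hm (hui i).stronglyMeasurable
            (hYIiint i) (hprod i)
          rw [h1]
          refine integral_congr_ae ?_
          filter_upwards [hcomp i] with ω hω
          rw [← hω]
      _ = ∫ ω, ∑ i, u ω i * CEY a ω i ∂μ :=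
          (integral_finset_sum _ fun i _ => hprod2 i).symm
      _ = ∫ ω, ⟪u ω, CEY a ω⟫ ∂μ := by
          refine integral_congr_ae (ae_of_all _ fun ω => ?_)
          simp [PiLp.inner_apply, RCLike.inner_apply, conj_trivial, mul_comm]
      _ = ∫ ω, H a ω * ⟪u ω, G a ω⟫ ∂μ := by
          refine integral_congr_ae ?_
          filter_upwards [hHG a] with ω hω
          rw [← hω, real_inner_smul_right]

  -- handy integrability maker
  have mkint : ∀ (f : Ω → ℝ), Measurable[mΩ] f → ∀ (C : ℝ),
      (∀ᵐ ω ∂μ, |f ω| ≤ C) → Integrable f μ := fun f hf C hC =>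
    integrable_bdd μ hf.aestronglyMeasurable (C := C) (by simpa using hC)
  -- measurability of composed-with-A maps, via indicator sums
  have hcompA : ∀ (v : α → Ω → EuclideanSpace ℝ (Fin n)), (∀ a, Measurable[mΩ] (v a)) →
      Measurable[mΩ] (fun ω => v (A ω) ω) := by
    intro v hv
    have : (fun ω => v (A ω) ω)
        = fun ω => ∑ a, (if A ω = a then (1:ℝ) else 0) • v a ω := by
      funext ω; simp [ite_smul]
    rw [this]
    exact Finset.measurable_sum _ fun a _ => (hindM a).smul (hv a)
  -- the `q` functions
  have hqm : ∀ a : α, Measurable[m] (fun ω => ⟪wh a ω, Y ω - Gh a ω⟫ / Hh a ω) → True :=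
    fun _ _ => trivial
  clear hqm
  -- bounds from the a.e. bank needed repeatedly
  have hCY0 : 0 ≤ CY := le_trans (norm_nonneg _) (hYb (Classical.arbitrary Ω))
  have hCG0 : 0 ≤ CG := le_trans (norm_nonneg _) (hGhb (A (Classical.arbitrary Ω))
    (Classical.arbitrary Ω))
  have hCφh0 : 0 ≤ Cφh := le_trans (norm_nonneg _)
    (hφhb (A (Classical.arbitrary Ω)) (A (Classical.arbitrary Ω)) (Classical.arbitrary Ω))
  have hCφ0 : 0 ≤ Cφ := le_trans (norm_nonneg _)
    (hφb (A (Classical.arbitrary Ω)) (A (Classical.arbitrary Ω)) (Classical.arbitrary Ω))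
  -- integrable: ⟪wh a, Gh a⟫
  have int_whGh : ∀ a : α, Integrable (fun ω => ⟪wh a ω, Gh a ω⟫) μ := by
    intro a
    refine mkint _ (Measurable.inner ((hwh a).mono hm le_rfl) ((hGh a).mono hm le_rfl))
      (Cw * CG) ?_
    filter_upwards [hwhB a] with ω h1
    exact le_trans (abs_real_inner_le_norm _ _)
      (mul_le_mul h1 (hGhb a ω) (norm_nonneg _) hCw0)
  -- integrable: ind a' * ⟪φh a' a, Gh a⟫ and H a' * ⟪φh a' a, Gh a⟫
  have int_indφhGh : ∀ a a' : α,
      Integrable (fun ω => (if A ω = a' then (1:ℝ) else 0) * ⟪φh a' a ω, Gh a ω⟫) μ := by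
    intro a a'
    refine mkint _ ((hindM a').mul
      (Measurable.inner ((hφh a' a).mono hm le_rfl) ((hGh a).mono hm le_rfl)))
      (Cφh * CG) (ae_of_all _ fun ω => ?_)
    rw [abs_mul]
    calc |(if A ω = a' then (1:ℝ) else 0)| * |⟪φh a' a ω, Gh a ω⟫| ≤ 1 * (Cφh * CG) := by
          apply mul_le_mul (hindb a' ω) _ (abs_nonneg _) zero_le_one
          exact le_trans (abs_real_inner_le_norm _ _)
            (mul_le_mul (hφhb a' a ω) (hGhb a ω) (norm_nonneg _) hCφh0)
      _ = Cφh * CG := one_mul _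
  have int_HφhGh : ∀ a a' : α,
      Integrable (fun ω => H a' ω * ⟪φh a' a ω, Gh a ω⟫) μ := by
    intro a a'
    refine mkint _ ((hHmΩ a').mul
      (Measurable.inner ((hφh a' a).mono hm le_rfl) ((hGh a).mono hm le_rfl)))
      (Cφh * CG) ?_
    filter_upwards [hH0 a', hH1 a'] with ω h0 h1
    rw [abs_mul]
    calc |H a' ω| * |⟪φh a' a ω, Gh a ω⟫| ≤ 1 * (Cφh * CG) := by
          apply mul_le_mul _ _ (abs_nonneg _) zero_le_one
          · rw [abs_of_nonneg h0]; exact h1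
          · exact le_trans (abs_real_inner_le_norm _ _)
              (mul_le_mul (hφhb a' a ω) (hGhb a ω) (norm_nonneg _) hCφh0)
      _ = Cφh * CG := one_mul _
  -- integrable : ind a * q a
  have int_indq : ∀ a : α, Integrable
      (fun ω => (if A ω = a then (1:ℝ) else 0) * (⟪wh a ω, Y ω - Gh a ω⟫ / Hh a ω)) μ := by
    intro a
    refine mkint _ ((hindM a).mul ((Measurable.inner ((hwh a).mono hm le_rfl)
      (hY.sub ((hGh a).mono hm le_rfl))).div ((hHh a).mono hm le_rfl)))
      (Cw * (CY + CG) / c) ?_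
    filter_upwards [hwhB a, hHhc a] with ω h1 h2
    rw [abs_mul, abs_div]
    have hnum : |⟪wh a ω, Y ω - Gh a ω⟫| ≤ Cw * (CY + CG) := by
      refine le_trans (abs_real_inner_le_norm _ _) (mul_le_mul h1 ?_ (norm_nonneg _) hCw0)
      exact le_trans (norm_sub_le _ _) (add_le_add (hYb ω) (hGhb a ω))
    have hden : c ≤ |Hh a ω| := le_trans h2 (le_abs_self _)
    calc |(if A ω = a then (1:ℝ) else 0)| * (|⟪wh a ω, Y ω - Gh a ω⟫| / |Hh a ω|)
        ≤ 1 * (Cw * (CY + CG) / c) := by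
          apply mul_le_mul (hindb a ω) _ (by positivity) zero_le_one
          exact div_le_div₀ (mul_nonneg hCw0 (add_nonneg hCY0 hCG0)) hnum hc hden
      _ = Cw * (CY + CG) / c := one_mul _
  -- integrable pieces for splitting `q`
  have int_innerY : ∀ a : α, Integrable
      (fun ω => ⟪(Hh a ω)⁻¹ • wh a ω, (if A ω = a then (1:ℝ) else 0) • Y ω⟫) μ := by
    intro a
    refine mkint _ (Measurable.inner
      ((((hHh a).mono hm le_rfl).inv).smul ((hwh a).mono hm le_rfl)) (hYIm a))
      (c⁻¹ * Cw * CY) ?_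
    filter_upwards [hwhB a, hHhc a] with ω h1 h2
    refine le_trans (abs_real_inner_le_norm _ _) ?_
    rw [norm_smul]
    have h3 : ‖(Hh a ω)⁻¹‖ ≤ c⁻¹ := by
      rw [Real.norm_eq_abs, abs_of_nonneg (inv_nonneg.2 (le_trans hc.le h2))]
      exact inv_anti₀ hc h2
    calc ‖(Hh a ω)⁻¹‖ * ‖wh a ω‖ * ‖(if A ω = a then (1:ℝ) else 0) • Y ω‖
        ≤ (c⁻¹ * Cw) * CY := by
          apply mul_le_mul _ (hYIb a ω) (norm_nonneg _) (by positivity)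
          exact mul_le_mul h3 h1 (norm_nonneg _) (by positivity)
      _ = c⁻¹ * Cw * CY := rfl
  have int_indwhGh : ∀ a : α, Integrable
      (fun ω => (if A ω = a then (1:ℝ) else 0) * (⟪wh a ω, Gh a ω⟫ / Hh a ω)) μ := by
    intro a
    refine mkint _ ((hindM a).mul ((Measurable.inner ((hwh a).mono hm le_rfl)
      ((hGh a).mono hm le_rfl)).div ((hHh a).mono hm le_rfl))) (Cw * CG / c) ?_
    filter_upwards [hwhB a, hHhc a] with ω h1 h2
    rw [abs_mul, abs_div]
    have hnum : |⟪wh a ω, Gh a ω⟫| ≤ Cw * CG :=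
      le_trans (abs_real_inner_le_norm _ _) (mul_le_mul h1 (hGhb a ω) (norm_nonneg _) hCw0)
    have hden : c ≤ |Hh a ω| := le_trans h2 (le_abs_self _)
    calc |(if A ω = a then (1:ℝ) else 0)| * (|⟪wh a ω, Gh a ω⟫| / |Hh a ω|)
        ≤ 1 * (Cw * CG / c) := by
          apply mul_le_mul (hindb a ω) _ (by positivity) zero_le_one
          exact div_le_div₀ (by positivity) hnum hc hden
      _ = Cw * CG / c := one_mul _
  have int_HinvG : ∀ a : α, Integrable
      (fun ω => H a ω * ⟪(Hh a ω)⁻¹ • wh a ω, G a ω⟫) μ := by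
    intro a
    refine mkint _ ((hHmΩ a).mul (Measurable.inner
      ((((hHh a).mono hm le_rfl).inv).smul ((hwh a).mono hm le_rfl)) (hGmΩ a)))
      (c⁻¹ * Cw * B) ?_
    filter_upwards [hwhB a, hHhc a, hH0 a, hH1 a, hGB a] with ω h1 h2 h3 h4 h5
    rw [abs_mul]
    have h6 : |⟪(Hh a ω)⁻¹ • wh a ω, G a ω⟫| ≤ c⁻¹ * Cw * B := by
      refine le_trans (abs_real_inner_le_norm _ _) ?_
      rw [norm_smul]
      apply mul_le_mul _ h5 (norm_nonneg _) (by positivity)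
      have h7 : ‖(Hh a ω)⁻¹‖ ≤ c⁻¹ := by
        rw [Real.norm_eq_abs, abs_of_nonneg (inv_nonneg.2 (le_trans hc.le h2))]
        exact inv_anti₀ hc h2
      exact mul_le_mul h7 h1 (norm_nonneg _) (by positivity)
    calc |H a ω| * |⟪(Hh a ω)⁻¹ • wh a ω, G a ω⟫| ≤ 1 * (c⁻¹ * Cw * B) := by
          apply mul_le_mul _ h6 (abs_nonneg _) zero_le_one
          rw [abs_of_nonneg h3]; exact h4
      _ = c⁻¹ * Cw * B := one_mul _
  have int_HwhGh : ∀ a : α, Integrable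
      (fun ω => H a ω * (⟪wh a ω, Gh a ω⟫ / Hh a ω)) μ := by
    intro a
    refine mkint _ ((hHmΩ a).mul ((Measurable.inner ((hwh a).mono hm le_rfl)
      ((hGh a).mono hm le_rfl)).div ((hHh a).mono hm le_rfl))) (Cw * CG / c) ?_
    filter_upwards [hwhB a, hHhc a, hH0 a, hH1 a] with ω h1 h2 h3 h4
    rw [abs_mul, abs_div]
    have hnum : |⟪wh a ω, Gh a ω⟫| ≤ Cw * CG :=
      le_trans (abs_real_inner_le_norm _ _) (mul_le_mul h1 (hGhb a ω) (norm_nonneg _) hCw0)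
    have hden : c ≤ |Hh a ω| := le_trans h2 (le_abs_self _)
    calc |H a ω| * (|⟪wh a ω, Gh a ω⟫| / |Hh a ω|) ≤ 1 * (Cw * CG / c) := by
          apply mul_le_mul _ _ (by positivity) zero_le_one
          · rw [abs_of_nonneg h3]; exact h4
          · exact div_le_div₀ (by positivity) hnum hc hden
      _ = Cw * CG / c := one_mul _

  -- real-valued composition with A
  have hcompAr : ∀ (v : α → Ω → ℝ), (∀ a, Measurable[mΩ] (v a)) →
      Measurable[mΩ] (fun ω => v (A ω) ω) := by
    intro v hv
    have : (fun ω => v (A ω) ω)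
        = fun ω => ∑ a, (if A ω = a then (1:ℝ) else 0) * v a ω := by
      funext ω; simp [ite_mul]
    rw [this]
    exact Finset.measurable_sum _ fun a _ => (hindM a).mul (hv a)
  have hwhB' : ∀ᵐ ω ∂μ, ∀ a, ‖wh a ω‖ ≤ Cw := ae_all_iff.2 hwhB
  have hHhc' : ∀ᵐ ω ∂μ, ∀ a, c ≤ Hh a ω := ae_all_iff.2 hHhc
  have int_f1 : Integrable (fun ω => ∑ a, ⟪wh a ω + φh (A ω) a ω, Gh a ω⟫) μ := by
    refine integrable_finset_sum _ fun a _ => ?_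
    refine mkint _ (Measurable.inner (((hwh a).mono hm le_rfl).add
      (hcompA (fun a' => φh a' a) (fun a' => (hφh a' a).mono hm le_rfl)))
      ((hGh a).mono hm le_rfl)) ((Cw + Cφh) * CG) ?_
    filter_upwards [hwhB a] with ω h1
    refine le_trans (abs_real_inner_le_norm _ _) ?_
    apply mul_le_mul _ (hGhb a ω) (norm_nonneg _) (by positivity)
    exact le_trans (norm_add_le _ _) (add_le_add h1 (hφhb (A ω) a ω))
  have int_f2 : Integrable (fun ω => ⟪wh (A ω) ω, Y ω - Gh (A ω) ω⟫ / Hh (A ω) ω) μ := by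
    refine mkint _ ((Measurable.inner (hcompA wh (fun a => (hwh a).mono hm le_rfl))
      (hY.sub (hcompA Gh (fun a => (hGh a).mono hm le_rfl)))).div
      (hcompAr Hh (fun a => (hHh a).mono hm le_rfl))) (Cw * (CY + CG) / c) ?_
    filter_upwards [hwhB', hHhc'] with ω h1 h2
    rw [abs_div]
    have hnum : |⟪wh (A ω) ω, Y ω - Gh (A ω) ω⟫| ≤ Cw * (CY + CG) := by
      refine le_trans (abs_real_inner_le_norm _ _)
        (mul_le_mul (h1 (A ω)) ?_ (norm_nonneg _) hCw0)
      exact le_trans (norm_sub_le _ _) (add_le_add (hYb ω) (hGhb (A ω) ω))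
    have hden : c ≤ |Hh (A ω) ω| := le_trans (h2 (A ω)) (le_abs_self _)
    exact div_le_div₀ (mul_nonneg hCw0 (add_nonneg hCY0 hCG0)) hnum hc hden
  have int_X : ∀ a : α, Integrable
      (fun ω => ⟪wh a ω + (∑ a', H a' ω • φh a' a ω), Gh a ω⟫) μ := by
    intro a
    have he : (fun ω => ⟪wh a ω + (∑ a', H a' ω • φh a' a ω), Gh a ω⟫)
        = fun ω => ⟪wh a ω, Gh a ω⟫ + ∑ a', H a' ω * ⟪φh a' a ω, Gh a ω⟫ := by
      funext ω
      rw [inner_add_left, sum_inner]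
      simp only [real_inner_smul_left]
    rw [he]
    exact (int_whGh a).add (integrable_finset_sum _ fun a' _ => int_HφhGh a a')
  have hf1 : ∫ ω, (∑ a, ⟪wh a ω + φh (A ω) a ω, Gh a ω⟫) ∂μ
      = ∑ a, ∫ ω, ⟪wh a ω + (∑ a', H a' ω • φh a' a ω), Gh a ω⟫ ∂μ := by
    calc ∫ ω, (∑ a, ⟪wh a ω + φh (A ω) a ω, Gh a ω⟫) ∂μ
        = ∫ ω, (∑ a, (⟪wh a ω, Gh a ω⟫
            + ∑ a', (if A ω = a' then (1:ℝ) else 0) * ⟪φh a' a ω, Gh a ω⟫)) ∂μ := by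
          refine integral_congr_ae (ae_of_all _ fun ω => ?_)
          refine Finset.sum_congr rfl fun a _ => ?_
          rw [inner_add_left]
          congr 1
          simp [ite_mul]
      _ = ∑ a, ∫ ω, (⟪wh a ω, Gh a ω⟫
            + ∑ a', (if A ω = a' then (1:ℝ) else 0) * ⟪φh a' a ω, Gh a ω⟫) ∂μ :=
          integral_finset_sum _ fun a _ => (int_whGh a).add
            (integrable_finset_sum _ fun a' _ => int_indφhGh a a')
      _ = ∑ a, (∫ ω, ⟪wh a ω, Gh a ω⟫ ∂μ
            + ∑ a', ∫ ω, (if A ω = a' then (1:ℝ) else 0) * ⟪φh a' a ω, Gh a ω⟫ ∂μ) := by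
          refine Finset.sum_congr rfl fun a _ => ?_
          rw [integral_add (int_whGh a)
            (integrable_finset_sum _ fun a' _ => int_indφhGh a a'),
            integral_finset_sum _ fun a' _ => int_indφhGh a a']
      _ = ∑ a, (∫ ω, ⟪wh a ω, Gh a ω⟫ ∂μ
            + ∑ a', ∫ ω, H a' ω * ⟪φh a' a ω, Gh a ω⟫ ∂μ) := by
          refine Finset.sum_congr rfl fun a _ => ?_
          congr 1
          refine Finset.sum_congr rfl fun a' _ => ?_
          exact I2 a' _ ((hφh a' a).inner (hGh a)) (Cφh * CG) (ae_of_all _ fun ω =>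
            le_trans (abs_real_inner_le_norm _ _)
              (mul_le_mul (hφhb a' a ω) (hGhb a ω) (norm_nonneg _) hCφh0))
      _ = ∑ a, ∫ ω, (⟪wh a ω, Gh a ω⟫ + ∑ a', H a' ω * ⟪φh a' a ω, Gh a ω⟫) ∂μ := by
          refine Finset.sum_congr rfl fun a _ => ?_
          rw [integral_add (int_whGh a)
            (integrable_finset_sum _ fun a' _ => int_HφhGh a a'),
            integral_finset_sum _ fun a' _ => int_HφhGh a a']
      _ = ∑ a, ∫ ω, ⟪wh a ω + (∑ a', H a' ω • φh a' a ω), Gh a ω⟫ ∂μ := by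
          refine Finset.sum_congr rfl fun a _ => ?_
          refine integral_congr_ae (ae_of_all _ fun ω => ?_)
          simp only [inner_add_left, sum_inner, real_inner_smul_left]
  have hf2 : ∫ ω, ⟪wh (A ω) ω, Y ω - Gh (A ω) ω⟫ / Hh (A ω) ω ∂μ
      = ∑ a, ∫ ω, (H a ω * ⟪(Hh a ω)⁻¹ • wh a ω, G a ω⟫
          - H a ω * (⟪wh a ω, Gh a ω⟫ / Hh a ω)) ∂μ := by
    calc ∫ ω, ⟪wh (A ω) ω, Y ω - Gh (A ω) ω⟫ / Hh (A ω) ω ∂μ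
        = ∫ ω, (∑ a, (if A ω = a then (1:ℝ) else 0)
            * (⟪wh a ω, Y ω - Gh a ω⟫ / Hh a ω)) ∂μ := by
          refine integral_congr_ae (ae_of_all _ fun ω => ?_)
          simp [ite_mul]
      _ = ∑ a, ∫ ω, (if A ω = a then (1:ℝ) else 0)
            * (⟪wh a ω, Y ω - Gh a ω⟫ / Hh a ω) ∂μ :=
          integral_finset_sum _ fun a _ => int_indq a
      _ = ∑ a, ∫ ω, (⟪(Hh a ω)⁻¹ • wh a ω, (if A ω = a then (1:ℝ) else 0) • Y ω⟫
            - (if A ω = a then (1:ℝ) else 0) * (⟪wh a ω, Gh a ω⟫ / Hh a ω)) ∂μ := by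
          refine Finset.sum_congr rfl fun a _ => ?_
          refine integral_congr_ae (ae_of_all _ fun ω => ?_)
          simp only [inner_sub_right, real_inner_smul_left, real_inner_smul_right]
          ring
      _ = ∑ a, (∫ ω, ⟪(Hh a ω)⁻¹ • wh a ω, (if A ω = a then (1:ℝ) else 0) • Y ω⟫ ∂μ
            - ∫ ω, (if A ω = a then (1:ℝ) else 0) * (⟪wh a ω, Gh a ω⟫ / Hh a ω) ∂μ) := by
          refine Finset.sum_congr rfl fun a _ => ?_
          exact integral_sub (int_innerY a) (int_indwhGh a)
      _ = ∑ a, (∫ ω, H a ω * ⟪(Hh a ω)⁻¹ • wh a ω, G a ω⟫ ∂μ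
            - ∫ ω, H a ω * (⟪wh a ω, Gh a ω⟫ / Hh a ω) ∂μ) := by
          refine Finset.sum_congr rfl fun a _ => ?_
          congr 1
          · refine I1 a _ (((hHh a).inv).smul (hwh a)) (c⁻¹ * Cw) ?_
            filter_upwards [hwhB a, hHhc a] with ω h1 h2
            rw [norm_smul]
            have h3 : ‖(Hh a ω)⁻¹‖ ≤ c⁻¹ := by
              rw [Real.norm_eq_abs, abs_of_nonneg (inv_nonneg.2 (le_trans hc.le h2))]
              exact inv_anti₀ hc h2
            exact mul_le_mul h3 h1 (norm_nonneg _) (by positivity)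
          · refine I2 a _ (((hwh a).inner (hGh a)).div (hHh a)) (Cw * CG / c) ?_
            filter_upwards [hwhB a, hHhc a] with ω h1 h2
            rw [abs_div]
            have hnum : |⟪wh a ω, Gh a ω⟫| ≤ Cw * CG :=
              le_trans (abs_real_inner_le_norm _ _)
                (mul_le_mul h1 (hGhb a ω) (norm_nonneg _) hCw0)
            exact div_le_div₀ (mul_nonneg hCw0 hCG0) hnum hc
              (le_trans h2 (le_abs_self _))
      _ = ∑ a, ∫ ω, (H a ω * ⟪(Hh a ω)⁻¹ • wh a ω, G a ω⟫
            - H a ω * (⟪wh a ω, Gh a ω⟫ / Hh a ω)) ∂μ := by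
          refine Finset.sum_congr rfl fun a _ => ?_
          exact (integral_sub (int_HinvG a) (int_HwhGh a)).symm
  -- Step A : the value of the estimator integral
  have EQ : (∫ ω, ((∑ a, ⟪wh a ω + φh (A ω) a ω, Gh a ω⟫)
          + ⟪wh (A ω) ω, Y ω - Gh (A ω) ω⟫ / Hh (A ω) ω) ∂μ)
      = ∑ a, (∫ ω, (⟪wh a ω + (∑ a', H a' ω • φh a' a ω), Gh a ω⟫
            + (H a ω * ⟪(Hh a ω)⁻¹ • wh a ω, G a ω⟫
                - H a ω * (⟪wh a ω, Gh a ω⟫ / Hh a ω))) ∂μ) := by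
    rw [integral_add int_f1 int_f2, hf1, hf2, ← Finset.sum_add_distrib]
    refine Finset.sum_congr rfl fun a _ => ?_
    exact (integral_add (int_X a) ((int_HinvG a).sub (int_HwhGh a))).symm

  
  -- Ψ side
  have hCw'0 : 0 ≤ Cw' := le_trans (norm_nonneg _)
    (hwb (A (Classical.arbitrary Ω)) (Classical.arbitrary Ω))
  have int_wG : ∀ a : α, Integrable (fun ω => ⟪w a ω, G a ω⟫) μ := by
    intro a
    refine mkint _ (Measurable.inner ((hw a).mono hm le_rfl) (hGmΩ a)) (Cw' * B) ?_
    filter_upwards [hGB a] with ω h1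
    exact le_trans (abs_real_inner_le_norm _ _)
      (mul_le_mul (hwb a ω) h1 (norm_nonneg _) hCw'0)
  -- a.e. all-quantified facts
  have hH0' : ∀ᵐ ω ∂μ, ∀ a, 0 ≤ H a ω := ae_all_iff.2 hH0
  have hH1' : ∀ᵐ ω ∂μ, ∀ a, H a ω ≤ 1 := ae_all_iff.2 hH1
  have hGB' : ∀ᵐ ω ∂μ, ∀ a, ‖G a ω‖ ≤ B := ae_all_iff.2 hGB
  -- bound on the weight-correction sums
  have hKm : ∀ a : α, Measurable[mΩ] (fun ω => ∑ a', H a' ω • φh a' a ω) :=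
    fun a => Finset.measurable_sum _ fun a' _ => (hHmΩ a').smul ((hφh a' a).mono hm le_rfl)
  have hKb : ∀ a : α, ∀ᵐ ω ∂μ, ‖∑ a', H a' ω • φh a' a ω‖ ≤ (Fintype.card α : ℝ) * Cφh := by
    intro a
    filter_upwards [hH0', hH1'] with ω h0 h1
    refine le_trans (norm_sum_le _ _) ?_
    have hb : ∀ a' : α, ‖H a' ω • φh a' a ω‖ ≤ Cφh := by
      intro a'
      rw [norm_smul]
      calc ‖H a' ω‖ * ‖φh a' a ω‖ ≤ 1 * Cφh := by
            apply mul_le_mul _ (hφhb a' a ω) (norm_nonneg _) zero_le_one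
            rw [Real.norm_eq_abs, abs_of_nonneg (h0 a')]; exact h1 a'
        _ = Cφh := one_mul _
    calc ∑ a', ‖H a' ω • φh a' a ω‖ ≤ ∑ _a' : α, Cφh :=
          Finset.sum_le_sum fun a' _ => hb a'
      _ = (Fintype.card α : ℝ) * Cφh := by
          rw [Finset.sum_const, Finset.card_univ, nsmul_eq_mul]
  -- integrability of the three decomposition terms
  have int_T1 : ∀ a : α, Integrable
      (fun ω => ⟪wh a ω - w a ω + ∑ a', H a' ω • φh a' a ω, G a ω⟫) μ := by
    intro a
    refine mkint _ (Measurable.inner ((((hwh a).mono hm le_rfl).sub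
      ((hw a).mono hm le_rfl)).add (hKm a)) (hGmΩ a))
      ((Cw + Cw' + (Fintype.card α : ℝ) * Cφh) * B) ?_
    filter_upwards [hwhB a, hGB a, hKb a] with ω h1 h2 h3
    refine le_trans (abs_real_inner_le_norm _ _) (mul_le_mul ?_ h2 (norm_nonneg _) ?_)
    · refine le_trans (norm_add_le _ _) (add_le_add (le_trans (norm_sub_le _ _)
        (add_le_add h1 (hwb a ω))) h3)
    · have h4 := le_trans (norm_nonneg (wh a ω)) h1
      have h5 : (0:ℝ) ≤ (Fintype.card α : ℝ) * Cφh :=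
        mul_nonneg (Nat.cast_nonneg _) hCφh0
      nlinarith
  have int_T2 : ∀ a : α, Integrable
      (fun ω => ((Hh a ω - H a ω) / Hh a ω) * ⟪wh a ω, Gh a ω - G a ω⟫) μ := by
    intro a
    refine mkint _ ((((hHh a).mono hm le_rfl).sub (hHmΩ a)).div
      ((hHh a).mono hm le_rfl) |>.mul (Measurable.inner ((hwh a).mono hm le_rfl)
      (((hGh a).mono hm le_rfl).sub (hGmΩ a)))) (2 / c * (Cw * (CG + B))) ?_
    filter_upwards [hwhB a, hHhc a, hH0 a, hH1 a, hGB a] with ω h1 h2 h3 h4 h5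
    rw [abs_mul, abs_div]
    have hd : |Hh a ω - H a ω| ≤ 2 := by
      rw [abs_sub_le_iff]
      constructor <;> nlinarith [hHhb a ω, le_trans hc.le h2]
    have hi : |⟪wh a ω, Gh a ω - G a ω⟫| ≤ Cw * (CG + B) := by
      refine le_trans (abs_real_inner_le_norm _ _)
        (mul_le_mul h1 ?_ (norm_nonneg _) hCw0)
      exact le_trans (norm_sub_le _ _) (add_le_add (hGhb a ω) h5)
    have hden : c ≤ |Hh a ω| := le_trans h2 (le_abs_self _)
    have hB' : (0:ℝ) ≤ Cw * (CG + B) := by positivity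
    calc |Hh a ω - H a ω| / |Hh a ω| * |⟪wh a ω, Gh a ω - G a ω⟫|
        ≤ (2 / c) * (Cw * (CG + B)) := by
          apply mul_le_mul _ hi (abs_nonneg _) (by positivity)
          exact div_le_div₀ (by norm_num) hd hc hden
      _ = 2 / c * (Cw * (CG + B)) := rfl
  have int_T3 : ∀ a : α, Integrable
      (fun ω => ⟪∑ a', H a' ω • φh a' a ω, Gh a ω - G a ω⟫) μ := by
    intro a
    refine mkint _ (Measurable.inner (hKm a)
      (((hGh a).mono hm le_rfl).sub (hGmΩ a)))
      ((Fintype.card α : ℝ) * Cφh * (CG + B)) ?_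
    filter_upwards [hKb a, hGB a] with ω h1 h2
    refine le_trans (abs_real_inner_le_norm _ _)
      (mul_le_mul h1 (le_trans (norm_sub_le _ _) (add_le_add (hGhb a ω) h2))
        (norm_nonneg _) ?_)
    exact mul_nonneg (Nat.cast_nonneg _) hCφh0
  -- decomposition of the difference
  have DIFF : (∫ ω, ((∑ a, ⟪wh a ω + φh (A ω) a ω, Gh a ω⟫)
          + ⟪wh (A ω) ω, Y ω - Gh (A ω) ω⟫ / Hh (A ω) ω) ∂μ)
        - (∫ ω, ∑ a, ⟪w a ω, G a ω⟫ ∂μ)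
      = (∑ a, ∫ ω, ⟪wh a ω - w a ω + ∑ a', H a' ω • φh a' a ω, G a ω⟫ ∂μ)
        + (∑ a, ∫ ω, ((Hh a ω - H a ω) / Hh a ω) * ⟪wh a ω, Gh a ω - G a ω⟫ ∂μ)
        + (∑ a, ∫ ω, ⟪∑ a', H a' ω • φh a' a ω, Gh a ω - G a ω⟫ ∂μ) := by
    rw [EQ, integral_finset_sum _ fun a _ => int_wG a, ← Finset.sum_sub_distrib]
    have hsplit : ∀ a : α,
        (∫ ω, (⟪wh a ω + (∑ a', H a' ω • φh a' a ω), Gh a ω⟫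
            + (H a ω * ⟪(Hh a ω)⁻¹ • wh a ω, G a ω⟫
                - H a ω * (⟪wh a ω, Gh a ω⟫ / Hh a ω))) ∂μ)
          - ∫ ω, ⟪w a ω, G a ω⟫ ∂μ
        = (∫ ω, ⟪wh a ω - w a ω + ∑ a', H a' ω • φh a' a ω, G a ω⟫ ∂μ)
          + (∫ ω, ((Hh a ω - H a ω) / Hh a ω) * ⟪wh a ω, Gh a ω - G a ω⟫ ∂μ)
          + ∫ ω, ⟪∑ a', H a' ω • φh a' a ω, Gh a ω - G a ω⟫ ∂μ := by
      intro a
      calc (∫ ω, (⟪wh a ω + (∑ a', H a' ω • φh a' a ω), Gh a ω⟫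
              + (H a ω * ⟪(Hh a ω)⁻¹ • wh a ω, G a ω⟫
                  - H a ω * (⟪wh a ω, Gh a ω⟫ / Hh a ω))) ∂μ)
            - ∫ ω, ⟪w a ω, G a ω⟫ ∂μ
          = ∫ ω, ((⟪wh a ω + (∑ a', H a' ω • φh a' a ω), Gh a ω⟫
              + (H a ω * ⟪(Hh a ω)⁻¹ • wh a ω, G a ω⟫
                  - H a ω * (⟪wh a ω, Gh a ω⟫ / Hh a ω)))
              - ⟪w a ω, G a ω⟫) ∂μ :=
            (integral_sub ((int_X a).add ((int_HinvG a).sub (int_HwhGh a)))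
              (int_wG a)).symm
        _ = ∫ ω, ((⟪wh a ω - w a ω + ∑ a', H a' ω • φh a' a ω, G a ω⟫
              + ((Hh a ω - H a ω) / Hh a ω) * ⟪wh a ω, Gh a ω - G a ω⟫)
              + ⟪∑ a', H a' ω • φh a' a ω, Gh a ω - G a ω⟫) ∂μ := by
            refine integral_congr_ae ?_
            filter_upwards [hHhc a] with ω h2
            exact key_alg (wh a ω) (w a ω) (Gh a ω) (G a ω)
              (∑ a', H a' ω • φh a' a ω) (H a ω) (Hh a ω)
              (ne_of_gt (lt_of_lt_of_le hc h2))
        _ = (∫ ω, (⟪wh a ω - w a ω + ∑ a', H a' ω • φh a' a ω, G a ω⟫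
              + ((Hh a ω - H a ω) / Hh a ω) * ⟪wh a ω, Gh a ω - G a ω⟫) ∂μ)
              + ∫ ω, ⟪∑ a', H a' ω • φh a' a ω, Gh a ω - G a ω⟫ ∂μ :=
            integral_add ((int_T1 a).add (int_T2 a)) (int_T3 a)
        _ = (∫ ω, ⟪wh a ω - w a ω + ∑ a', H a' ω • φh a' a ω, G a ω⟫ ∂μ)
              + (∫ ω, ((Hh a ω - H a ω) / Hh a ω) * ⟪wh a ω, Gh a ω - G a ω⟫ ∂μ)
              + ∫ ω, ⟪∑ a', H a' ω • φh a' a ω, Gh a ω - G a ω⟫ ∂μ := by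
            rw [integral_add (int_T1 a) (int_T2 a)]
    calc ∑ a, ((∫ ω, (⟪wh a ω + (∑ a', H a' ω • φh a' a ω), Gh a ω⟫
            + (H a ω * ⟪(Hh a ω)⁻¹ • wh a ω, G a ω⟫
                - H a ω * (⟪wh a ω, Gh a ω⟫ / Hh a ω))) ∂μ)
          - ∫ ω, ⟪w a ω, G a ω⟫ ∂μ)
        = ∑ a, ((∫ ω, ⟪wh a ω - w a ω + ∑ a', H a' ω • φh a' a ω, G a ω⟫ ∂μ)
          + (∫ ω, ((Hh a ω - H a ω) / Hh a ω) * ⟪wh a ω, Gh a ω - G a ω⟫ ∂μ)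
          + ∫ ω, ⟪∑ a', H a' ω • φh a' a ω, Gh a ω - G a ω⟫ ∂μ) :=
          Finset.sum_congr rfl fun a _ => hsplit a
      _ = _ := by rw [Finset.sum_add_distrib, Finset.sum_add_distrib]

  
  -- norm functions and L² facts
  have measGhG : ∀ a : α, Measurable[mΩ] (fun ω => Gh a ω - G a ω) :=
    fun a => ((hGh a).mono hm le_rfl).sub (hGmΩ a)
  have L2_GhG : ∀ a : α, MemLp (fun ω => ‖Gh a ω - G a ω‖) 2 μ := by
    intro a
    refine memL2_bdd μ (measGhG a).norm.aestronglyMeasurable (C := CG + B) ?_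
    filter_upwards [hGB a] with ω h1
    rw [norm_norm]
    exact le_trans (norm_sub_le _ _) (add_le_add (hGhb a ω) h1)
  have L2_HhH : ∀ a : α, MemLp (fun ω => |Hh a ω - H a ω|) 2 μ := by
    intro a
    refine memL2_bdd μ ((((hHh a).mono hm le_rfl).sub (hHmΩ a)).abs).aestronglyMeasurable
      (C := 2) ?_
    filter_upwards [hHhc a, hH0 a, hH1 a] with ω h2 h3 h4
    rw [Real.norm_eq_abs, abs_abs, abs_sub_le_iff]
    constructor <;> nlinarith [hHhb a ω, le_trans hc.le h2]
  have measφA : ∀ a : α, Measurable[mΩ] (fun ω => φh (A ω) a ω - φ (A ω) a ω) := by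
    intro a
    have he : (fun ω => φh (A ω) a ω - φ (A ω) a ω)
        = fun ω => (fun a' ω' => φh a' a ω' - φ a' a ω') (A ω) ω := rfl
    rw [he]
    exact hcompA _ fun a' => ((hφh a' a).mono hm le_rfl).sub ((hφ a' a).mono hm le_rfl)
  have L2_φA : ∀ a : α, MemLp (fun ω => ‖φh (A ω) a ω - φ (A ω) a ω‖) 2 μ := by
    intro a
    refine memL2_bdd μ (measφA a).norm.aestronglyMeasurable (C := Cφh + Cφ)
      (ae_of_all _ fun ω => ?_)
    rw [norm_norm]
    exact le_trans (norm_sub_le _ _) (add_le_add (hφhb (A ω) a ω) (hφb (A ω) a ω))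
  have int_fg2 : ∀ a : α, Integrable
      (fun ω => ‖Gh a ω - G a ω‖ * |Hh a ω - H a ω|) μ := by
    intro a
    refine mkint _ ((measGhG a).norm.mul
      ((((hHh a).mono hm le_rfl).sub (hHmΩ a)).abs)) ((CG + B) * 2) ?_
    filter_upwards [hGB a, hHhc a, hH0 a, hH1 a] with ω h1 h2 h3 h4
    rw [abs_mul, abs_norm, abs_abs]
    have hn : ‖Gh a ω - G a ω‖ ≤ CG + B :=
      le_trans (norm_sub_le _ _) (add_le_add (hGhb a ω) h1)
    have hd : |Hh a ω - H a ω| ≤ 2 := by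
      rw [abs_sub_le_iff]
      constructor <;> nlinarith [hHhb a ω, le_trans hc.le h2]
    exact mul_le_mul hn hd (abs_nonneg _) (le_trans (norm_nonneg _) hn)
  have int_fg3 : ∀ a : α, Integrable
      (fun ω => ‖φh (A ω) a ω - φ (A ω) a ω‖ * ‖Gh a ω - G a ω‖) μ := by
    intro a
    refine mkint _ ((measφA a).norm.mul (measGhG a).norm) ((Cφh + Cφ) * (CG + B)) ?_
    filter_upwards [hGB a] with ω h1
    rw [abs_mul, abs_norm, abs_norm]
    have hn1 : ‖φh (A ω) a ω - φ (A ω) a ω‖ ≤ Cφh + Cφ :=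
      le_trans (norm_sub_le _ _) (add_le_add (hφhb (A ω) a ω) (hφb (A ω) a ω))
    have hn2 : ‖Gh a ω - G a ω‖ ≤ CG + B :=
      le_trans (norm_sub_le _ _) (add_le_add (hGhb a ω) h1)
    exact mul_le_mul hn1 hn2 (norm_nonneg _) (le_trans (norm_nonneg _) hn1)
  -- Bound 1
  have hU1 : |∑ a, ∫ ω, ⟪wh a ω - w a ω + ∑ a', H a' ω • φh a' a ω, G a ω⟫ ∂μ|
      ≤ B * ∫ ω, ∑ a, ‖wh a ω - w a ω + ∑ a', H a' ω • φh a' a ω‖ ∂μ := by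
    rw [← integral_finset_sum _ fun a _ => int_T1 a]
    have intnorm : Integrable
        (fun ω => ∑ a, B * ‖wh a ω - w a ω + ∑ a', H a' ω • φh a' a ω‖) μ := by
      refine integrable_finset_sum _ fun a _ => ?_
      refine Integrable.const_mul ?_ B
      refine mkint _ ((((hwh a).mono hm le_rfl).sub
        ((hw a).mono hm le_rfl)).add (hKm a)).norm
        (Cw + Cw' + (Fintype.card α : ℝ) * Cφh) ?_
      filter_upwards [hwhB a, hKb a] with ω h1 h3
      rw [abs_norm]
      exact le_trans (norm_add_le _ _) (add_le_add (le_trans (norm_sub_le _ _)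
        (add_le_add h1 (hwb a ω))) h3)
    have step : ‖∫ ω, ∑ a, ⟪wh a ω - w a ω + ∑ a', H a' ω • φh a' a ω, G a ω⟫ ∂μ‖
        ≤ ∫ ω, ∑ a, B * ‖wh a ω - w a ω + ∑ a', H a' ω • φh a' a ω‖ ∂μ := by
      refine norm_integral_le_of_norm_le intnorm ?_
      filter_upwards [hGB'] with ω h1
      rw [Real.norm_eq_abs]
      refine le_trans (Finset.abs_sum_le_sum_abs _ _) (Finset.sum_le_sum fun a _ => ?_)
      calc |⟪wh a ω - w a ω + ∑ a', H a' ω • φh a' a ω, G a ω⟫|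
          ≤ ‖wh a ω - w a ω + ∑ a', H a' ω • φh a' a ω‖ * ‖G a ω‖ :=
            abs_real_inner_le_norm _ _
        _ ≤ ‖wh a ω - w a ω + ∑ a', H a' ω • φh a' a ω‖ * B :=
            mul_le_mul_of_nonneg_left (h1 a) (norm_nonneg _)
        _ = B * ‖wh a ω - w a ω + ∑ a', H a' ω • φh a' a ω‖ := mul_comm _ _
    calc |∫ ω, ∑ a, ⟪wh a ω - w a ω + ∑ a', H a' ω • φh a' a ω, G a ω⟫ ∂μ|
        ≤ ∫ ω, ∑ a, B * ‖wh a ω - w a ω + ∑ a', H a' ω • φh a' a ω‖ ∂μ := step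
      _ = B * ∫ ω, ∑ a, ‖wh a ω - w a ω + ∑ a', H a' ω • φh a' a ω‖ ∂μ := by
          rw [← integral_const_mul]
          refine integral_congr_ae (ae_of_all _ fun ω => ?_)
          simp [Finset.mul_sum]
  -- Bound 2
  have hU2 : |∑ a, ∫ ω, ((Hh a ω - H a ω) / Hh a ω) * ⟪wh a ω, Gh a ω - G a ω⟫ ∂μ|
      ≤ (Cw / c) * Real.sqrt (∫ ω, ∑ a, ‖Gh a ω - G a ω‖ ^ 2 ∂μ)
          * Real.sqrt (∫ ω, ∑ a, |Hh a ω - H a ω| ^ 2 ∂μ) := by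
    rw [← integral_finset_sum _ fun a _ => int_T2 a]
    have intg2 : Integrable
        (fun ω => ∑ a, Cw / c * (‖Gh a ω - G a ω‖ * |Hh a ω - H a ω|)) μ :=
      integrable_finset_sum _ fun a _ => (int_fg2 a).const_mul _
    have step : ‖∫ ω, ∑ a, ((Hh a ω - H a ω) / Hh a ω) * ⟪wh a ω, Gh a ω - G a ω⟫ ∂μ‖
        ≤ ∫ ω, ∑ a, Cw / c * (‖Gh a ω - G a ω‖ * |Hh a ω - H a ω|) ∂μ := by
      refine norm_integral_le_of_norm_le intg2 ?_
      filter_upwards [hwhB', hHhc'] with ω h1 h2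
      rw [Real.norm_eq_abs]
      refine le_trans (Finset.abs_sum_le_sum_abs _ _) (Finset.sum_le_sum fun a _ => ?_)
      have hden : c ≤ |Hh a ω| := le_trans (h2 a) (le_abs_self _)
      have h3 : |Hh a ω|⁻¹ ≤ c⁻¹ := inv_anti₀ hc hden
      have h4 : |⟪wh a ω, Gh a ω - G a ω⟫| ≤ Cw * ‖Gh a ω - G a ω‖ :=
        le_trans (abs_real_inner_le_norm _ _)
          (mul_le_mul_of_nonneg_right (h1 a) (norm_nonneg _))
      calc |((Hh a ω - H a ω) / Hh a ω) * ⟪wh a ω, Gh a ω - G a ω⟫|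
          = |Hh a ω - H a ω| * |Hh a ω|⁻¹ * |⟪wh a ω, Gh a ω - G a ω⟫| := by
            rw [abs_mul, abs_div, div_eq_mul_inv]
        _ ≤ |Hh a ω - H a ω| * c⁻¹ * (Cw * ‖Gh a ω - G a ω‖) := by
            apply mul_le_mul (mul_le_mul_of_nonneg_left h3 (abs_nonneg _)) h4
              (abs_nonneg _) (by positivity)
        _ = Cw / c * (‖Gh a ω - G a ω‖ * |Hh a ω - H a ω|) := by
            rw [div_eq_mul_inv]; ring
    calc |∫ ω, ∑ a, ((Hh a ω - H a ω) / Hh a ω) * ⟪wh a ω, Gh a ω - G a ω⟫ ∂μ|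
        ≤ ∫ ω, ∑ a, Cw / c * (‖Gh a ω - G a ω‖ * |Hh a ω - H a ω|) ∂μ := step
      _ = (Cw / c) * ∫ ω, ∑ a, ‖Gh a ω - G a ω‖ * |Hh a ω - H a ω| ∂μ := by
          rw [← integral_const_mul]
          refine integral_congr_ae (ae_of_all _ fun ω => ?_)
          simp [Finset.mul_sum]
      _ ≤ (Cw / c) * (Real.sqrt (∫ ω, ∑ a, ‖Gh a ω - G a ω‖ ^ 2 ∂μ)
            * Real.sqrt (∫ ω, ∑ a, |Hh a ω - H a ω| ^ 2 ∂μ)) := by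
          refine mul_le_mul_of_nonneg_left ?_ (div_nonneg hCw0 hc.le)
          exact integral_sum_mul_le μ (fun a => L2_GhG a) (fun a => L2_HhH a)
            (fun a => int_fg2 a) (fun a ω => norm_nonneg _) (fun a ω => abs_nonneg _)
      _ = _ := by rw [mul_assoc]
  -- Bound 3
  have int_Hg3 : ∀ a a' : α, Integrable
      (fun ω => H a' ω * ⟪φh a' a ω - φ a' a ω, Gh a ω - G a ω⟫) μ := by
    intro a a'
    refine mkint _ ((hHmΩ a').mul (Measurable.inner
      (((hφh a' a).mono hm le_rfl).sub ((hφ a' a).mono hm le_rfl)) (measGhG a)))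
      ((Cφh + Cφ) * (CG + B)) ?_
    filter_upwards [hH0 a', hH1 a', hGB a] with ω h0 h1 h5
    rw [abs_mul]
    calc |H a' ω| * |⟪φh a' a ω - φ a' a ω, Gh a ω - G a ω⟫|
        ≤ 1 * ((Cφh + Cφ) * (CG + B)) := by
          apply mul_le_mul _ _ (abs_nonneg _) zero_le_one
          · rw [abs_of_nonneg h0]; exact h1
          · refine le_trans (abs_real_inner_le_norm _ _) (mul_le_mul ?_ ?_
              (norm_nonneg _) (by positivity))
            · exact le_trans (norm_sub_le _ _) (add_le_add (hφhb a' a ω) (hφb a' a ω))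
            · exact le_trans (norm_sub_le _ _) (add_le_add (hGhb a ω) h5)
      _ = (Cφh + Cφ) * (CG + B) := one_mul _
  have int_indg3 : ∀ a a' : α, Integrable
      (fun ω => (if A ω = a' then (1:ℝ) else 0)
        * ⟪φh a' a ω - φ a' a ω, Gh a ω - G a ω⟫) μ := by
    intro a a'
    refine mkint _ ((hindM a').mul (Measurable.inner
      (((hφh a' a).mono hm le_rfl).sub ((hφ a' a).mono hm le_rfl)) (measGhG a)))
      ((Cφh + Cφ) * (CG + B)) ?_
    filter_upwards [hGB a] with ω h5
    rw [abs_mul]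
    calc |(if A ω = a' then (1:ℝ) else 0)| * |⟪φh a' a ω - φ a' a ω, Gh a ω - G a ω⟫|
        ≤ 1 * ((Cφh + Cφ) * (CG + B)) := by
          apply mul_le_mul (hindb a' ω) _ (abs_nonneg _) zero_le_one
          refine le_trans (abs_real_inner_le_norm _ _) (mul_le_mul ?_ ?_
            (norm_nonneg _) (by positivity))
          · exact le_trans (norm_sub_le _ _) (add_le_add (hφhb a' a ω) (hφb a' a ω))
          · exact le_trans (norm_sub_le _ _) (add_le_add (hGhb a ω) h5)
      _ = (Cφh + Cφ) * (CG + B) := one_mul _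
  have int_T3' : ∀ a : α, Integrable
      (fun ω => ⟪φh (A ω) a ω - φ (A ω) a ω, Gh a ω - G a ω⟫) μ := by
    intro a
    refine mkint _ (Measurable.inner (measφA a) (measGhG a))
      ((Cφh + Cφ) * (CG + B)) ?_
    filter_upwards [hGB a] with ω h5
    refine le_trans (abs_real_inner_le_norm _ _) (mul_le_mul ?_ ?_
      (norm_nonneg _) (by positivity))
    · exact le_trans (norm_sub_le _ _) (add_le_add (hφhb (A ω) a ω) (hφb (A ω) a ω))
    · exact le_trans (norm_sub_le _ _) (add_le_add (hGhb a ω) h5)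
  have hT3eq : ∀ a : α,
      ∫ ω, ⟪∑ a', H a' ω • φh a' a ω, Gh a ω - G a ω⟫ ∂μ
        = ∫ ω, ⟪φh (A ω) a ω - φ (A ω) a ω, Gh a ω - G a ω⟫ ∂μ := by
    intro a
    calc ∫ ω, ⟪∑ a', H a' ω • φh a' a ω, Gh a ω - G a ω⟫ ∂μ
        = ∫ ω, ∑ a', H a' ω * ⟪φh a' a ω - φ a' a ω, Gh a ω - G a ω⟫ ∂μ := by
          refine integral_congr_ae ?_
          filter_upwards [hφ0 a] with ω h0
          have he : ∑ a', H a' ω • (φh a' a ω - φ a' a ω)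
              = ∑ a', H a' ω • φh a' a ω := by
            simp only [smul_sub, Finset.sum_sub_distrib, h0, sub_zero]
          rw [← he, sum_inner]
          simp only [real_inner_smul_left]
      _ = ∑ a', ∫ ω, H a' ω * ⟪φh a' a ω - φ a' a ω, Gh a ω - G a ω⟫ ∂μ :=
          integral_finset_sum _ fun a' _ => int_Hg3 a a'
      _ = ∑ a', ∫ ω, (if A ω = a' then (1:ℝ) else 0)
            * ⟪φh a' a ω - φ a' a ω, Gh a ω - G a ω⟫ ∂μ := by
          refine Finset.sum_congr rfl fun a' _ => ?_
          refine (I2 a' _ (Measurable.inner ((hφh a' a).sub (hφ a' a))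
            ((hGh a).sub (hGm a))) ((Cφh + Cφ) * (CG + B)) ?_).symm
          filter_upwards [hGB a] with ω h5
          refine le_trans (abs_real_inner_le_norm _ _) (mul_le_mul ?_ ?_
            (norm_nonneg _) (by positivity))
          · exact le_trans (norm_sub_le _ _) (add_le_add (hφhb a' a ω) (hφb a' a ω))
          · exact le_trans (norm_sub_le _ _) (add_le_add (hGhb a ω) h5)
      _ = ∫ ω, ∑ a', (if A ω = a' then (1:ℝ) else 0)
            * ⟪φh a' a ω - φ a' a ω, Gh a ω - G a ω⟫ ∂μ :=
          (integral_finset_sum _ fun a' _ => int_indg3 a a').symm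
      _ = ∫ ω, ⟪φh (A ω) a ω - φ (A ω) a ω, Gh a ω - G a ω⟫ ∂μ := by
          refine integral_congr_ae (ae_of_all _ fun ω => ?_)
          simp [ite_mul]
  have hU3 : |∑ a, ∫ ω, ⟪∑ a', H a' ω • φh a' a ω, Gh a ω - G a ω⟫ ∂μ|
      ≤ Real.sqrt (∫ ω, ∑ a, ‖φh (A ω) a ω - φ (A ω) a ω‖ ^ 2 ∂μ)
          * Real.sqrt (∫ ω, ∑ a, ‖Gh a ω - G a ω‖ ^ 2 ∂μ) := by
    have hrw : ∑ a, ∫ ω, ⟪∑ a', H a' ω • φh a' a ω, Gh a ω - G a ω⟫ ∂μ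
        = ∫ ω, ∑ a, ⟪φh (A ω) a ω - φ (A ω) a ω, Gh a ω - G a ω⟫ ∂μ := by
      calc ∑ a, ∫ ω, ⟪∑ a', H a' ω • φh a' a ω, Gh a ω - G a ω⟫ ∂μ
          = ∑ a, ∫ ω, ⟪φh (A ω) a ω - φ (A ω) a ω, Gh a ω - G a ω⟫ ∂μ :=
            Finset.sum_congr rfl fun a _ => hT3eq a
        _ = ∫ ω, ∑ a, ⟪φh (A ω) a ω - φ (A ω) a ω, Gh a ω - G a ω⟫ ∂μ :=
            (integral_finset_sum _ fun a _ => int_T3' a).symm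
    rw [hrw]
    have step : ‖∫ ω, ∑ a, ⟪φh (A ω) a ω - φ (A ω) a ω, Gh a ω - G a ω⟫ ∂μ‖
        ≤ ∫ ω, ∑ a, ‖φh (A ω) a ω - φ (A ω) a ω‖ * ‖Gh a ω - G a ω‖ ∂μ := by
      refine norm_integral_le_of_norm_le
        (integrable_finset_sum _ fun a _ => int_fg3 a) ?_
      refine ae_of_all _ fun ω => ?_
      rw [Real.norm_eq_abs]
      refine le_trans (Finset.abs_sum_le_sum_abs _ _) (Finset.sum_le_sum fun a _ => ?_)
      exact abs_real_inner_le_norm _ _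
    calc |∫ ω, ∑ a, ⟪φh (A ω) a ω - φ (A ω) a ω, Gh a ω - G a ω⟫ ∂μ|
        ≤ ∫ ω, ∑ a, ‖φh (A ω) a ω - φ (A ω) a ω‖ * ‖Gh a ω - G a ω‖ ∂μ := step
      _ ≤ _ := integral_sum_mul_le μ (fun a => L2_φA a) (fun a => L2_GhG a)
          (fun a => int_fg3 a) (fun a ω => norm_nonneg _) (fun a ω => norm_nonneg _)
  -- conclusion
  calc |(∫ ω, ((∑ a, ⟪wh a ω + φh (A ω) a ω, Gh a ω⟫)
          + ⟪wh (A ω) ω, Y ω - Gh (A ω) ω⟫ / Hh (A ω) ω) ∂μ)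
        - ∫ ω, ∑ a, ⟪w a ω, G a ω⟫ ∂μ|
      = |(∑ a, ∫ ω, ⟪wh a ω - w a ω + ∑ a', H a' ω • φh a' a ω, G a ω⟫ ∂μ)
        + (∑ a, ∫ ω, ((Hh a ω - H a ω) / Hh a ω) * ⟪wh a ω, Gh a ω - G a ω⟫ ∂μ)
        + (∑ a, ∫ ω, ⟪∑ a', H a' ω • φh a' a ω, Gh a ω - G a ω⟫ ∂μ)| := by rw [DIFF]
    _ ≤ |(∑ a, ∫ ω, ⟪wh a ω - w a ω + ∑ a', H a' ω • φh a' a ω, G a ω⟫ ∂μ)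
        + (∑ a, ∫ ω, ((Hh a ω - H a ω) / Hh a ω) * ⟪wh a ω, Gh a ω - G a ω⟫ ∂μ)|
        + |∑ a, ∫ ω, ⟪∑ a', H a' ω • φh a' a ω, Gh a ω - G a ω⟫ ∂μ| := abs_add_le _ _
    _ ≤ (|∑ a, ∫ ω, ⟪wh a ω - w a ω + ∑ a', H a' ω • φh a' a ω, G a ω⟫ ∂μ|
        + |∑ a, ∫ ω, ((Hh a ω - H a ω) / Hh a ω) * ⟪wh a ω, Gh a ω - G a ω⟫ ∂μ|)
        + |∑ a, ∫ ω, ⟪∑ a', H a' ω • φh a' a ω, Gh a ω - G a ω⟫ ∂μ| :=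
        add_le_add_left (abs_add_le _ _) _
    _ ≤ _ := add_le_add (add_le_add hU1 hU2) hU3


/-- (Quantitative bias bound underlying Theorem 2.)
In the setting of the bias decomposition, if in addition `‖G(a)‖ ≤ B` and
`‖ŵ(a)‖ ≤ C_w` almost everywhere, then
`|E[φ̂_unc] − Ψ(w)|
  ≤ B·E[∑_a ‖ŵ(a) − w(a) + ∑_{a'} H(a')·φ̂(a',a)‖]
  + (C_w/c)·√(E[∑_a ‖Ĝ(a) − G(a)‖²])·√(E[∑_a |Ĥ(a) − H(a)|²])
  + √(E[∑_a ‖φ̂(A,a) − φ(A,a)‖²])·√(E[∑_a ‖Ĝ(a) − G(a)‖²])`. -/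
theorem stmt4 {Ω : Type*} {mΩ : MeasurableSpace Ω}
    (μ : Measure Ω) [IsProbabilityMeasure μ]
    (m : MeasurableSpace Ω) (hm : m ≤ mΩ)
    {α : Type*} [Fintype α] [DecidableEq α] [MeasurableSpace α] [MeasurableSingletonClass α]
    {n : ℕ}
    (A : Ω → α) (hA : Measurable[mΩ] A)
    (Y : Ω → EuclideanSpace ℝ (Fin n)) (hY : Measurable[mΩ] Y)
    (CY : ℝ) (hYb : ∀ ω, ‖Y ω‖ ≤ CY)
    -- positivity of the cluster-level treatment probability
    (c : ℝ) (hc : 0 < c)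
    (hH : ∀ a : α, ∀ᵐ ω ∂μ, c ≤ condH μ m A a ω)
    -- bounded m-measurable weight functions
    (w : α → Ω → EuclideanSpace ℝ (Fin n)) (hw : ∀ a, Measurable[m] (w a))
    (Cw' : ℝ) (hwb : ∀ a ω, ‖w a ω‖ ≤ Cw')
    -- bounded m-measurable influence functions of the weights, with conditional mean zero
    (φ : α → α → Ω → EuclideanSpace ℝ (Fin n)) (hφ : ∀ a' a, Measurable[m] (φ a' a))
    (Cφ : ℝ) (hφb : ∀ a' a ω, ‖φ a' a ω‖ ≤ Cφ)
    (hφ0 : ∀ a : α, ∀ᵐ ω ∂μ, ∑ a', condH μ m A a' ω • φ a' a ω = 0)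
    -- fixed bounded m-measurable nuisance estimates
    (Gh : α → Ω → EuclideanSpace ℝ (Fin n)) (hGh : ∀ a, Measurable[m] (Gh a))
    (CG : ℝ) (hGhb : ∀ a ω, ‖Gh a ω‖ ≤ CG)
    (Hh : α → Ω → ℝ) (hHh : ∀ a, Measurable[m] (Hh a))
    (hHhc : ∀ a : α, ∀ᵐ ω ∂μ, c ≤ Hh a ω) (hHhb : ∀ a ω, Hh a ω ≤ 1)
    (wh : α → Ω → EuclideanSpace ℝ (Fin n)) (hwh : ∀ a, Measurable[m] (wh a))
    (φh : α → α → Ω → EuclideanSpace ℝ (Fin n)) (hφh : ∀ a' a, Measurable[m] (φh a' a))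
    (Cφh : ℝ) (hφhb : ∀ a' a ω, ‖φh a' a ω‖ ≤ Cφh)
    -- additional a.e. bounds on the outcome regression and the estimated weights
    (B : ℝ) (hGB : ∀ a : α, ∀ᵐ ω ∂μ, ‖condG μ m A Y a ω‖ ≤ B)
    (Cw : ℝ) (hwhB : ∀ a : α, ∀ᵐ ω ∂μ, ‖wh a ω‖ ≤ Cw) :
    |(∫ ω, ((∑ a, ⟪wh a ω + φh (A ω) a ω, Gh a ω⟫)
          + ⟪wh (A ω) ω, Y ω - Gh (A ω) ω⟫ / Hh (A ω) ω) ∂μ)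
        - ∫ ω, ∑ a, ⟪w a ω, condG μ m A Y a ω⟫ ∂μ|
      ≤ B * (∫ ω, ∑ a,
            ‖wh a ω - w a ω + ∑ a', condH μ m A a' ω • φh a' a ω‖ ∂μ)
        + (Cw / c) *
            Real.sqrt (∫ ω, ∑ a, ‖Gh a ω - condG μ m A Y a ω‖ ^ 2 ∂μ) *
            Real.sqrt (∫ ω, ∑ a, |Hh a ω - condH μ m A a ω| ^ 2 ∂μ)
        + Real.sqrt (∫ ω, ∑ a, ‖φh (A ω) a ω - φ (A ω) a ω‖ ^ 2 ∂μ) *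
            Real.sqrt (∫ ω, ∑ a, ‖Gh a ω - condG μ m A Y a ω‖ ^ 2 ∂μ) := by
  exact stmt4_aux hm μ A hA Y hY CY hYb c hc hH w hw Cw' hwb φ hφ Cφ hφb hφ0 Gh hGh CG hGhb Hh hHh hHhc hHhb wh hwh φh hφh Cφh hφhb B hGB Cw hwhB
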